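/- Let Φ : G → B(H) satisfy the μ-cosine equation with Φ(0) = I and Φ(x)* = Φ(−x), fix ξ ∈ H and set f(x) := ⟨Φ(x)ξ, ξ⟩ and K_f(x,y) := (1/2)(f(−y+x) + μ(x)f(−y−x)). Then K_f(x,y) = ⟨Φ(x)ξ, Φ(y)ξ⟩ for all x,y ∈ G. -/

import Mathlib

theorem stmt_9 {G : Type*} [AddCommGroup G]
    {H : Type*} [NormedAddCommGroup H] [InnerProductSpace ℂ H] [CompleteSpace H]
    (μ : G → ℂ) (hμ : ∀ x y, μ (x + y) = μ x * μ y) (hμ0 : μ 0 = 1)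
    (hμne : ∀ x, μ x ≠ 0)
    (Φ : G → (H →L[ℂ] H))
    (hΦ : ∀ x y, Φ (x + y) + μ y • Φ (x - y) = (2 : ℂ) • (Φ x * Φ y))
    (hΦ0 : Φ 0 = 1)
    (hherm : ∀ x, ContinuousLinearMap.adjoint (Φ x) = Φ (-x))
    (ξ : H) (f : G → ℂ) (hf : ∀ x, f x = inner ℂ ξ (Φ x ξ))
    (K : G → G → ℂ)
    (hK : ∀ x y, K x y = (1 / 2 : ℂ) * (f (-y + x) + μ x * f (-y - x))) :
    ∀ x y, K x y = inner ℂ (Φ y ξ) (Φ x ξ) := by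
  intro x y
  have h := hΦ (-y) x
  have h2 : (inner ℂ ξ ((Φ (-y + x) + μ x • Φ (-y - x)) ξ) : ℂ)
      = inner ℂ ξ (((2 : ℂ) • (Φ (-y) * Φ x)) ξ) := by rw [h]
  simp only [ContinuousLinearMap.add_apply, ContinuousLinearMap.smul_apply,
    ContinuousLinearMap.mul_apply, inner_add_right, inner_smul_right] at h2
  have hadj : (inner ℂ (Φ y ξ) (Φ x ξ) : ℂ) = inner ℂ ξ (Φ (-y) (Φ x ξ)) := by
    have : Φ y = ContinuousLinearMap.adjoint (Φ (-y)) := by rw [hherm, neg_neg]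
    rw [this, ContinuousLinearMap.adjoint_inner_left]
  rw [hK, hf, hf, hadj]
  rw [h2]
  ring
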